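/- Let A, C ∈ ℝ^{n×n}, r ≥ ε ≥ 0, let Θ, λ > 0 satisfy |exp(At)| ≤ Θ e^{−λt} for all t ≥ 0, let d, q : [0,∞) → [−1,1] be measurable, and let x be a solution of system (2.12). Define v(t) := x(t−r) − x(t−r−εd(t)) for t ≥ 0. Then for every σ ∈ (0, λ) and every t ≥ 0: max_{0 ≤ s ≤ t} (e^{σs} |x(s)|) ≤ Θ |x(0)| + (Θ|C| / (λ−σ)) · sup_{0 ≤ s ≤ t} (e^{σs} |v(s)|). -/

import Mathlib

set_option maxHeartbeats 2000000
set_option synthInstance.maxHeartbeats 1000000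

open MeasureTheory

/-- Matrix-vector multiplication between Euclidean spaces. -/
noncomputable def mv {n m : ℕ} (A : Matrix (Fin n) (Fin m) ℝ)
    (x : EuclideanSpace ℝ (Fin m)) : EuclideanSpace ℝ (Fin n) :=
  Matrix.toEuclideanLin A x

/-- Operator norm of a matrix induced by the Euclidean vector norms. -/
noncomputable def opNorm {n m : ℕ} (A : Matrix (Fin n) (Fin m) ℝ) : ℝ :=
  ‖LinearMap.toContinuousLinearMap (Matrix.toEuclideanLin A)‖

/-- `mexp A t = exp (t A)`, the matrix exponential. -/
noncomputable def mexp {n : ℕ} (A : Matrix (Fin n) (Fin n) ℝ) (t : ℝ) :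
    Matrix (Fin n) (Fin n) ℝ :=
  NormedSpace.exp (t • A)

section Bridge

variable {n : ℕ}

lemma mv_eq' (M : Matrix (Fin n) (Fin n) ℝ) (y : EuclideanSpace ℝ (Fin n)) :
    mv M y = Matrix.toEuclideanCLM (𝕜 := ℝ) M y := rfl

lemma opNorm_eq' (M : Matrix (Fin n) (Fin n) ℝ) :
    opNorm M = ‖Matrix.toEuclideanCLM (𝕜 := ℝ) M‖ := by
  have : LinearMap.toContinuousLinearMap (Matrix.toEuclideanLin M)
      = Matrix.toEuclideanCLM (𝕜 := ℝ) M := by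
    apply ContinuousLinearMap.coe_injective
    rfl
  rw [opNorm, this]

lemma toEuclideanCLM_cont' : Continuous (fun M : Matrix (Fin n) (Fin n) ℝ =>
    Matrix.toEuclideanCLM (𝕜 := ℝ) M) := by
  have : (fun M : Matrix (Fin n) (Fin n) ℝ => Matrix.toEuclideanCLM (𝕜 := ℝ) M)
      = fun M => LinearMap.toContinuousLinearMap (Matrix.toEuclideanLin M) := by
    funext M
    apply ContinuousLinearMap.coe_injective
    rfl
  rw [this]
  exact LinearMap.continuous_of_finiteDimensional
    ((LinearMap.toContinuousLinearMap.toLinearMap : _ →ₗ[ℝ] _).comp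
      (Matrix.toEuclideanLin.toLinearMap : Matrix (Fin n) (Fin n) ℝ →ₗ[ℝ] _))

lemma clm_mexp' (M : Matrix (Fin n) (Fin n) ℝ) (t : ℝ) :
    Matrix.toEuclideanCLM (𝕜 := ℝ) (mexp M t)
      = NormedSpace.exp (t • Matrix.toEuclideanCLM (𝕜 := ℝ) M) := by
  letI : SeminormedRing (Matrix (Fin n) (Fin n) ℝ) := Matrix.linftyOpSemiNormedRing
  letI : NormedRing (Matrix (Fin n) (Fin n) ℝ) := Matrix.linftyOpNormedRing
  letI : NormedAlgebra ℝ (Matrix (Fin n) (Fin n) ℝ) := Matrix.linftyOpNormedAlgebra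
  letI : NormedAlgebra ℚ (Matrix (Fin n) (Fin n) ℝ) := .restrictScalars ℚ ℝ _
  letI : NormedAlgebra ℚ (EuclideanSpace ℝ (Fin n) →L[ℝ] EuclideanSpace ℝ (Fin n)) :=
    .restrictScalars ℚ ℝ _
  rw [mexp]
  have h := NormedSpace.map_exp (Matrix.toEuclideanCLM (𝕜 := ℝ) (n := Fin n))
    toEuclideanCLM_cont' (t • M)
  rw [_root_.map_smul] at h
  exact h

end Bridge

section Banach

variable {E : Type*} [NormedAddCommGroup E] [NormedSpace ℝ E] [CompleteSpace E]

lemma triangle_swap' (h : ℝ → ℝ → E) (τ : ℝ)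
    (hm : AEStronglyMeasurable (fun p : ℝ × ℝ => h p.1 p.2)
      ((volume.restrict (Set.Ioc 0 τ)).prod (volume.restrict (Set.Ioc 0 τ))))
    (M : ℝ) (hM : ∀ s ∈ Set.Ioc 0 τ, ∀ u ∈ Set.Ioc 0 τ, ‖h s u‖ ≤ M) :
    ∫ u in Set.Ioc 0 τ, (∫ s in Set.Ioc u τ, h s u)
      = ∫ s in Set.Ioc 0 τ, (∫ u in Set.Ioc 0 s, h s u) := by
  haveI : IsFiniteMeasure (volume.restrict (Set.Ioc (0:ℝ) τ)) := by
    constructor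
    simp [Real.volume_Ioc, lt_top_iff_ne_top]
  classical
  set K : ℝ × ℝ → E := fun p => if p.2 < p.1 then h p.1 p.2 else 0 with hK
  have hKind : K = Set.indicator {p : ℝ × ℝ | p.2 < p.1} (fun p => h p.1 p.2) := by
    funext p
    simp [hK, Set.indicator_apply, Set.mem_setOf_eq]
  have hsetm : MeasurableSet {p : ℝ × ℝ | p.2 < p.1} :=
    measurableSet_lt measurable_snd measurable_fst
  have hKm : AEStronglyMeasurable K
      ((volume.restrict (Set.Ioc 0 τ)).prod (volume.restrict (Set.Ioc 0 τ))) := by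
    rw [hKind]; exact hm.indicator hsetm
  have hKint : Integrable K
      ((volume.restrict (Set.Ioc 0 τ)).prod (volume.restrict (Set.Ioc 0 τ))) := by
    refine Integrable.mono' (integrable_const (max M 0)) hKm ?_
    rw [Measure.prod_restrict]
    refine (ae_restrict_iff' (measurableSet_Ioc.prod measurableSet_Ioc)).2
      (Filter.Eventually.of_forall fun p hp => ?_)
    obtain ⟨hp1, hp2⟩ := hp
    by_cases hlt : p.2 < p.1
    · simp only [hK, if_pos hlt]
      exact le_max_of_le_left (hM p.1 hp1 p.2 hp2)
    · simp only [hK, if_neg hlt]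
      simp
  have swap := integral_integral_swap (f := fun s u => K (s, u)) hKint
  calc ∫ u in Set.Ioc 0 τ, (∫ s in Set.Ioc u τ, h s u)
      = ∫ u in Set.Ioc 0 τ, (∫ s in Set.Ioc 0 τ, K (s, u)) := by
        refine setIntegral_congr_fun measurableSet_Ioc (fun u hu => ?_)
        have h1 : ∫ s in Set.Ioc 0 τ, K (s, u)
            = ∫ s in Set.Ioc 0 τ, Set.indicator (Set.Ioi u) (fun s => h s u) s := by
          refine setIntegral_congr_fun measurableSet_Ioc (fun s _ => ?_)
          by_cases hus : u < s
          · simp [hK, hus, Set.indicator_apply]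
          · simp [hK, hus, Set.indicator_apply]
        rw [h1, integral_indicator measurableSet_Ioi,
          Measure.restrict_restrict measurableSet_Ioi]
        have h2 : Set.Ioi u ∩ Set.Ioc 0 τ = Set.Ioc u τ := by
          ext s
          simp only [Set.mem_inter_iff, Set.mem_Ioi, Set.mem_Ioc]
          constructor
          · rintro ⟨h3, _, h5⟩; exact ⟨h3, h5⟩
          · rintro ⟨h3, h4⟩; exact ⟨h3, hu.1.trans h3, h4⟩
        rw [h2]
    _ = ∫ s in Set.Ioc 0 τ, (∫ u in Set.Ioc 0 τ, K (s, u)) := swap.symm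
    _ = ∫ s in Set.Ioc 0 τ, (∫ u in Set.Ioc 0 s, h s u) := by
        refine setIntegral_congr_fun measurableSet_Ioc (fun s hs => ?_)
        have h1 : ∫ u in Set.Ioc 0 τ, K (s, u)
            = ∫ u in Set.Ioc 0 τ, Set.indicator (Set.Iio s) (fun u => h s u) u := by
          refine setIntegral_congr_fun measurableSet_Ioc (fun u _ => ?_)
          by_cases hus : u < s
          · simp [hK, hus, Set.indicator_apply]
          · simp [hK, hus, Set.indicator_apply]
        rw [h1, integral_indicator measurableSet_Iio,
          Measure.restrict_restrict measurableSet_Iio]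
        have h2 : Set.Iio s ∩ Set.Ioc 0 τ = Set.Ioo 0 s := by
          ext u
          simp only [Set.mem_inter_iff, Set.mem_Iio, Set.mem_Ioc, Set.mem_Ioo]
          constructor
          · rintro ⟨h3, h4, _⟩; exact ⟨h4, h3⟩
          · rintro ⟨h3, h4⟩; exact ⟨h4, h3, h4.le.trans hs.2⟩
        rw [h2, ← integral_Ioc_eq_integral_Ioo]

lemma expE_hasDerivAt (B : E →L[ℝ] E) (s : ℝ) :
    HasDerivAt (fun u : ℝ => NormedSpace.exp ((-u) • B))
      (-(B * NormedSpace.exp ((-s) • B))) s := by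
  have h1 : HasDerivAt (fun u : ℝ => NormedSpace.exp (u • B))
      (B * NormedSpace.exp ((-s) • B)) (-s) := hasDerivAt_exp_smul_const' B (-s)
  have h2 : HasDerivAt (fun u : ℝ => -u) (-1 : ℝ) s := (hasDerivAt_neg s)
  have h3 := h1.scomp s h2
  have h4 : (fun u : ℝ => NormedSpace.exp (u • B)) ∘ Neg.neg
      = fun u : ℝ => NormedSpace.exp ((-u) • B) := rfl
  rw [h4] at h3
  simpa using h3

lemma expE_cont (B : E →L[ℝ] E) :
    Continuous (fun u : ℝ => NormedSpace.exp ((-u) • B)) :=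
  continuous_iff_continuousAt.2 fun s => (expE_hasDerivAt B s).continuousAt

lemma expE_apply_hasDerivAt (B : E →L[ℝ] E) (y : E) (s : ℝ) :
    HasDerivAt (fun u : ℝ => -(NormedSpace.exp ((-u) • B) y))
      (B (NormedSpace.exp ((-s) • B) y)) s := by
  have h4 := (expE_hasDerivAt B s).clm_apply (hasDerivAt_const s y)
  have h5 := h4.neg
  simpa [Pi.neg_def] using h5

lemma expE_apply_cont (B : E →L[ℝ] E) (y : E) :
    Continuous (fun u : ℝ => NormedSpace.exp ((-u) • B) y) :=
  (isBoundedBilinearMap_apply.continuous).comp ((expE_cont B).prodMk continuous_const)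

lemma expE_ftc (B : E →L[ℝ] E) (y : E) (a b : ℝ) :
    ∫ s in a..b, B (NormedSpace.exp ((-s) • B) y)
      = NormedSpace.exp ((-a) • B) y - NormedSpace.exp ((-b) • B) y := by
  have h := intervalIntegral.integral_eq_sub_of_hasDerivAt
    (f := fun u : ℝ => -(NormedSpace.exp ((-u) • B) y))
    (fun s _ => expE_apply_hasDerivAt B y s)
    (Continuous.intervalIntegrable (B.continuous.comp (expE_apply_cont B y)) a b)
  rw [h]
  abel

lemma expE_add (B : E →L[ℝ] E) (a b : ℝ) :
    NormedSpace.exp (a • B) * NormedSpace.exp (b • B)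
      = NormedSpace.exp ((a + b) • B) := by
  rw [add_smul]
  letI : NormedAlgebra ℚ (E →L[ℝ] E) := .restrictScalars ℚ ℝ _
  refine (NormedSpace.exp_add_of_commute ?_).symm
  show _ = _
  ext z
  simp [ContinuousLinearMap.mul_apply, _root_.map_smul, smul_comm a b]
lemma voc (B : E →L[ℝ] E) (c : E) (g X : ℝ → E) (τ : ℝ) (hτ : 0 ≤ τ)
    (hgm : AEStronglyMeasurable g (volume.restrict (Set.Ioc 0 τ)))
    (Mg : ℝ) (hMg : ∀ s ∈ Set.Ioc 0 τ, ‖g s‖ ≤ Mg)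
    (hXc : ContinuousOn X (Set.Icc 0 τ))
    (hX : ∀ s ∈ Set.Icc 0 τ, X s = c + ∫ u in (0:ℝ)..s, (B (X u) + g u)) :
    NormedSpace.exp ((-τ) • B) (X τ)
      = c + ∫ u in (0:ℝ)..τ, NormedSpace.exp ((-u) • B) (g u) := by
  haveI : IsFiniteMeasure (volume.restrict (Set.Ioc (0:ℝ) τ)) := by
    constructor; simp [Real.volume_Ioc, lt_top_iff_ne_top]
  set e : ℝ → (E →L[ℝ] E) := fun u => NormedSpace.exp ((-u) • B) with he
  -- bounds
  obtain ⟨MX, hMX⟩ := isCompact_Icc.exists_bound_of_continuousOn hXc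
  obtain ⟨Me, hMe⟩ := isCompact_Icc.exists_bound_of_continuousOn (expE_cont B).continuousOn
    (s := Set.Icc 0 τ)
  have hMe0 : (0:ℝ) ≤ Me := (norm_nonneg _).trans (hMe 0 ⟨le_rfl, hτ⟩)
  -- integrability helper
  have intIoc : ∀ (f : ℝ → E) (M : ℝ), AEStronglyMeasurable f (volume.restrict (Set.Ioc 0 τ)) →
      (∀ s ∈ Set.Ioc 0 τ, ‖f s‖ ≤ M) → IntervalIntegrable f volume 0 τ := by
    intro f M hm hb
    rw [intervalIntegrable_iff, Set.uIoc_of_le hτ]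
    refine Integrable.mono' (integrable_const M) hm ?_
    exact (ae_restrict_iff' measurableSet_Ioc).2 (Filter.Eventually.of_forall hb)
  -- the function G
  set G : ℝ → E := fun u => B (X u) + g u with hG
  have hXm : AEStronglyMeasurable X (volume.restrict (Set.Ioc 0 τ)) :=
    (hXc.mono Set.Ioc_subset_Icc_self).aestronglyMeasurable measurableSet_Ioc
  have hGm : AEStronglyMeasurable G (volume.restrict (Set.Ioc 0 τ)) :=
    (B.continuous.comp_aestronglyMeasurable hXm).add hgm
  have hGb : ∀ u ∈ Set.Ioc 0 τ, ‖G u‖ ≤ ‖B‖ * MX + Mg := by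
    intro u hu
    refine (norm_add_le _ _).trans (add_le_add ?_ (hMg u hu))
    exact (B.le_opNorm _).trans (by
      have := hMX u (Set.Ioc_subset_Icc_self hu)
      exact mul_le_mul_of_nonneg_left this (norm_nonneg _))
  have hGint : IntervalIntegrable G volume 0 τ := intIoc G _ hGm hGb
  have hgint : IntervalIntegrable g volume 0 τ := intIoc g Mg hgm hMg
  -- e applied along integrands
  have heval : Continuous (fun p : (E →L[ℝ] E) × E => p.1 p.2) :=
    isBoundedBilinearMap_apply.continuous
  have hEGm : AEStronglyMeasurable (fun u => e u (G u)) (volume.restrict (Set.Ioc 0 τ)) :=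
    heval.comp_aestronglyMeasurable (((expE_cont B).aestronglyMeasurable).prodMk hGm)
  have hEGb : ∀ u ∈ Set.Ioc 0 τ, ‖e u (G u)‖ ≤ Me * (‖B‖ * MX + Mg) := by
    intro u hu
    refine ((e u).le_opNorm _).trans ?_
    exact mul_le_mul (hMe u (Set.Ioc_subset_Icc_self hu)) (hGb u hu) (norm_nonneg _) hMe0
  have hEGint : IntervalIntegrable (fun u => e u (G u)) volume 0 τ :=
    intIoc _ _ hEGm hEGb
  have hEgm : AEStronglyMeasurable (fun u => e u (g u)) (volume.restrict (Set.Ioc 0 τ)) :=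
    heval.comp_aestronglyMeasurable (((expE_cont B).aestronglyMeasurable).prodMk hgm)
  have hEgb : ∀ u ∈ Set.Ioc 0 τ, ‖e u (g u)‖ ≤ Me * Mg := by
    intro u hu
    refine ((e u).le_opNorm _).trans ?_
    exact mul_le_mul (hMe u (Set.Ioc_subset_Icc_self hu)) (hMg u hu) (norm_nonneg _) hMe0
  have hEgint : IntervalIntegrable (fun u => e u (g u)) volume 0 τ := intIoc _ _ hEgm hEgb
  have hEτGm : AEStronglyMeasurable (fun u => e τ (G u)) (volume.restrict (Set.Ioc 0 τ)) :=
    (e τ).continuous.comp_aestronglyMeasurable hGm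
  have hEτGb : ∀ u ∈ Set.Ioc 0 τ, ‖e τ (G u)‖ ≤ ‖e τ‖ * (‖B‖ * MX + Mg) := by
    intro u hu
    exact ((e τ).le_opNorm _).trans
      (mul_le_mul_of_nonneg_left (hGb u hu) (norm_nonneg _))
  have hEτGint : IntervalIntegrable (fun u => e τ (G u)) volume 0 τ := intIoc _ _ hEτGm hEτGb
  -- continuity-based integrand
  have hBEXc : ContinuousOn (fun u => B (e u (X u))) (Set.Icc 0 τ) :=
    B.continuous.comp_continuousOn
      (heval.comp_continuousOn (((expE_cont B).continuousOn).prodMk hXc))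
  have hBEXint : IntervalIntegrable (fun u => B (e u (X u))) volume 0 τ := by
    rw [intervalIntegrable_iff, Set.uIoc_of_le hτ]
    exact (hBEXc.integrableOn_Icc).mono_set Set.Ioc_subset_Icc_self
  -- commute fact
  have hcomm : ∀ (u : ℝ) (y : E), e u (B y) = B (e u y) := by
    intro u y
    have h1 : Commute ((-u) • B) B := by
      show ((-u) • B) * B = B * ((-u) • B)
      ext z
      simp [ContinuousLinearMap.mul_apply, _root_.map_smul]
    have h2 : Commute (NormedSpace.exp ((-u) • B)) B := h1.exp_left
    calc e u (B y) = (e u * B) y := rfl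
      _ = (B * e u) y := by rw [h2.eq]
      _ = B (e u y) := rfl
  -- step 1
  have hτΙ : τ ∈ Set.Icc 0 τ := ⟨hτ, le_rfl⟩
  have step1 : e τ (X τ) = e τ c + ∫ u in (0:ℝ)..τ, e τ (G u) := by
    rw [hX τ hτΙ, map_add, (e τ).intervalIntegral_comp_comm hGint]
  -- step 2
  have step2 : ∫ u in (0:ℝ)..τ, e τ (G u)
      = (∫ u in (0:ℝ)..τ, (e τ (G u) - e u (G u))) + ∫ u in (0:ℝ)..τ, e u (G u) := by
    rw [← intervalIntegral.integral_add (hEτGint.sub hEGint) hEGint]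
    congr 1
    funext u
    abel
  -- step 4: difference term as triangle integral
  have step4 : (∫ u in (0:ℝ)..τ, (e τ (G u) - e u (G u)))
      = -∫ u in Set.Ioc 0 τ, (∫ s in Set.Ioc u τ, B (e s (G u))) := by
    rw [intervalIntegral.integral_of_le hτ, ← integral_neg]
    refine setIntegral_congr_fun measurableSet_Ioc (fun u hu => ?_)
    have h1 : ∫ s in Set.Ioc u τ, B (e s (G u))
        = ∫ s in u..τ, B (e s (G u)) := (intervalIntegral.integral_of_le hu.2).symm
    rw [h1, expE_ftc B (G u) u τ]
    abel
  -- step 5: Fubini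
  have step5 : ∫ u in Set.Ioc 0 τ, (∫ s in Set.Ioc u τ, B (e s (G u)))
      = ∫ s in Set.Ioc 0 τ, (∫ u in Set.Ioc 0 s, B (e s (G u))) := by
    refine triangle_swap' (fun s u => B (e s (G u))) τ ?_ (‖B‖ * (Me * (‖B‖ * MX + Mg))) ?_
    · exact B.continuous.comp_aestronglyMeasurable
        (heval.comp_aestronglyMeasurable
          ((((expE_cont B).comp continuous_fst).aestronglyMeasurable).prodMk hGm.comp_snd))
    · intro s hs u hu
      refine (B.le_opNorm _).trans (mul_le_mul_of_nonneg_left ?_ (norm_nonneg _))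
      refine ((e s).le_opNorm _).trans ?_
      exact mul_le_mul (hMe s (Set.Ioc_subset_Icc_self hs)) (hGb u hu) (norm_nonneg _) hMe0
  -- step 6: inner integral
  have step6 : ∫ s in Set.Ioc 0 τ, (∫ u in Set.Ioc 0 s, B (e s (G u)))
      = (∫ s in Set.Ioc 0 τ, B (e s (X s))) - ∫ s in Set.Ioc 0 τ, B (e s c) := by
    rw [← integral_sub]
    · refine setIntegral_congr_fun measurableSet_Ioc (fun s hs => ?_)
      have hGon : IntegrableOn G (Set.Ioc 0 s) volume := by
        have := intervalIntegrable_iff.1 hGint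
        rw [Set.uIoc_of_le hτ] at this
        exact this.mono_set (Set.Ioc_subset_Ioc_right hs.2)
      have h2 : ∫ u in Set.Ioc 0 s, B (e s (G u))
          = (B.comp (e s)) (∫ u in Set.Ioc 0 s, G u) := by
        rw [← ContinuousLinearMap.integral_comp_comm _ hGon]
        rfl
      have h3 : ∫ u in Set.Ioc 0 s, G u = X s - c := by
        rw [← intervalIntegral.integral_of_le hs.1.le]
        have := hX s ⟨hs.1.le, hs.2⟩
        rw [this]
        abel
      rw [h2, h3]
      simp [ContinuousLinearMap.comp_apply, map_sub]
    · exact (hBEXc.integrableOn_Icc).mono_set Set.Ioc_subset_Icc_self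
    · have : ContinuousOn (fun s => B (e s c)) (Set.Icc 0 τ) :=
        (B.continuous.comp (expE_apply_cont B c)).continuousOn
      exact (this.integrableOn_Icc).mono_set Set.Ioc_subset_Icc_self
  -- step 8
  have step8 : ∫ s in Set.Ioc 0 τ, B (e s c) = c - e τ c := by
    rw [← intervalIntegral.integral_of_le hτ, expE_ftc B c 0 τ]
    have : e 0 = 1 := by
      simp [he, NormedSpace.exp_zero]
    rw [he] at *
    simp only []
    rw [show NormedSpace.exp ((-(0:ℝ)) • B) = 1 by simp [NormedSpace.exp_zero]]
    rfl
  -- step 9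
  have step9 : ∫ u in (0:ℝ)..τ, e u (G u)
      = (∫ s in Set.Ioc 0 τ, B (e s (X s))) + ∫ u in (0:ℝ)..τ, e u (g u) := by
    have h1 : ∀ u, e u (G u) = B (e u (X u)) + e u (g u) := by
      intro u
      rw [hG]
      simp only [map_add]
      rw [hcomm u (X u)]
    calc ∫ u in (0:ℝ)..τ, e u (G u)
        = ∫ u in (0:ℝ)..τ, (B (e u (X u)) + e u (g u)) := by
          congr 1; funext u; exact h1 u
      _ = (∫ u in (0:ℝ)..τ, B (e u (X u))) + ∫ u in (0:ℝ)..τ, e u (g u) :=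
          intervalIntegral.integral_add hBEXint hEgint
      _ = (∫ s in Set.Ioc 0 τ, B (e s (X s))) + ∫ u in (0:ℝ)..τ, e u (g u) := by
          rw [intervalIntegral.integral_of_le hτ]
  -- assemble
  rw [step1, step2, step4, step5, step6, step9, step8]
  abel
end Banach

theorem stmt_11 (n : ℕ) (A C : Matrix (Fin n) (Fin n) ℝ)
    (r ε Θ lam : ℝ) (hε : 0 ≤ ε) (hεr : ε ≤ r) (hΘ : 0 < Θ) (hlam : 0 < lam)
    (hdecay : ∀ t : ℝ, 0 ≤ t → opNorm (mexp A t) ≤ Θ * Real.exp (-lam * t))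
    (d q : ℝ → ℝ) (hd : Measurable d) (hd1 : ∀ t, 0 ≤ t → d t ∈ Set.Icc (-1 : ℝ) 1)
    (hq : Measurable q) (hq1 : ∀ t, 0 ≤ t → q t ∈ Set.Icc (-1 : ℝ) 1)
    (x : ℝ → EuclideanSpace ℝ (Fin n))
    (hxc : ContinuousOn x (Set.Ici (-(r + ε))))
    (hxode : ∀ t : ℝ, 0 ≤ t →
      x t = x 0 + ∫ s in (0 : ℝ)..t,
        (mv A (x s) + q s • mv C (x (s - r - ε * d s) - x (s - r))))
    (v : ℝ → EuclideanSpace ℝ (Fin n))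
    (hv : ∀ t : ℝ, 0 ≤ t → v t = x (t - r) - x (t - r - ε * d t)) :
    ∀ σ : ℝ, σ ∈ Set.Ioo 0 lam → ∀ t : ℝ, 0 ≤ t →
      sSup ((fun s => Real.exp (σ * s) * ‖x s‖) '' Set.Icc 0 t) ≤
        Θ * ‖x 0‖ + Θ * opNorm C / (lam - σ) *
          sSup ((fun s => Real.exp (σ * s) * ‖v s‖) '' Set.Icc 0 t) := by
  intro σ hσ t ht
  obtain ⟨hσ0, hσlam⟩ := hσ
  set Ac : EuclideanSpace ℝ (Fin n) →L[ℝ] EuclideanSpace ℝ (Fin n) :=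
    Matrix.toEuclideanCLM (𝕜 := ℝ) A with hAc
  set Cc : EuclideanSpace ℝ (Fin n) →L[ℝ] EuclideanSpace ℝ (Fin n) :=
    Matrix.toEuclideanCLM (𝕜 := ℝ) C with hCc
  set R : ℝ := r + ε with hR
  have hR0 : 0 ≤ R := by simp only [hR]; linarith
  have hsubIci : ∀ τ : ℝ, 0 ≤ τ → Set.Icc 0 τ ⊆ Set.Ici (-R) :=
    fun τ _ u hu => le_trans (neg_nonpos.2 hR0) hu.1
  -- continuous clamped version of x
  set X : ℝ → EuclideanSpace ℝ (Fin n) := fun u => x (max u (-R)) with hXdef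
  have hXcont : Continuous X := by
    have hmax : Continuous (fun u : ℝ => max u (-R)) :=
      continuous_id.max continuous_const
    have h := hxc.comp_continuous (f := fun u : ℝ => max u (-R)) hmax
      (fun u => le_max_right u (-R))
    exact h
  have hXeq : ∀ u : ℝ, -R ≤ u → X u = x u := by
    intro u hu
    simp only [hXdef, max_eq_left hu]
  -- argument bounds
  have harg1 : ∀ s : ℝ, 0 ≤ s → -R ≤ s - r - ε * d s := by
    intro s hs
    have hds := hd1 s hs
    have h1 : ε * d s ≤ ε := by
      calc ε * d s ≤ ε * 1 := mul_le_mul_of_nonneg_left hds.2 hε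
        _ = ε := mul_one ε
    simp only [hR]
    nlinarith
  have harg2 : ∀ s : ℝ, 0 ≤ s → -R ≤ s - r := by
    intro s hs
    simp only [hR]
    nlinarith
  -- the forcing function
  set f : ℝ → EuclideanSpace ℝ (Fin n) :=
    fun s => q s • (Cc (x (s - r - ε * d s) - x (s - r))) with hfdef
  -- measurability of f on [0, τ]
  have hfmeas : ∀ τ : ℝ, AEStronglyMeasurable f (volume.restrict (Set.Ioc 0 τ)) := by
    intro τ
    set ftil : ℝ → EuclideanSpace ℝ (Fin n) :=
      fun s => q s • (Cc (X (s - r - ε * d s) - X (s - r))) with hftil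
    have hm1 : Measurable fun s : ℝ => s - r - ε * d s :=
      (measurable_id.sub_const r).sub (hd.const_mul ε)
    have hm2 : Measurable fun s : ℝ => s - r := measurable_id.sub_const r
    have hmf : Measurable ftil := by
      refine hq.smul ?_
      exact Cc.continuous.measurable.comp
        (((hXcont.measurable.comp hm1)).sub (hXcont.measurable.comp hm2))
    refine (hmf.aestronglyMeasurable).congr ?_
    refine (ae_restrict_iff' measurableSet_Ioc).2 (Filter.Eventually.of_forall fun s hs => ?_)
    have hs0 : (0:ℝ) ≤ s := hs.1.le
    simp only [hftil, hfdef, hXeq _ (harg1 s hs0), hXeq _ (harg2 s hs0)]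
  -- the ODE in CLM form
  have hODE : ∀ τ : ℝ, 0 ≤ τ → ∀ s ∈ Set.Icc (0:ℝ) τ,
      x s = x 0 + ∫ u in (0:ℝ)..s, (Ac (x u) + f u) := by
    intro τ _ s hs
    have hint_eq : (fun u => mv A (x u) + q u • mv C (x (u - r - ε * d u) - x (u - r)))
        = fun u => Ac (x u) + f u := by
      funext u
      rw [mv_eq', mv_eq']
    have h := hxode s hs.1
    rw [hint_eq] at h
    exact h
  -- global bound for x on [-R, t]
  obtain ⟨M, hM⟩ := (isCompact_Icc (a := -R) (b := t)).exists_bound_of_continuousOn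
    hXcont.continuousOn
  have hMx : ∀ u ∈ Set.Icc (-R) t, ‖x u‖ ≤ M := by
    intro u hu
    rw [← hXeq u hu.1]
    exact hM u hu
  have hM0 : 0 ≤ M := le_trans (norm_nonneg _) (hM (-R) ⟨le_rfl, le_trans (neg_nonpos.2 hR0) ht⟩)
  -- bound for f on [0, t]
  have hq_abs : ∀ s : ℝ, 0 ≤ s → |q s| ≤ 1 := fun s hs => abs_le.2 (hq1 s hs)
  have hnormCc : opNorm C = ‖Cc‖ := opNorm_eq' C
  -- norm of v
  have hvnorm : ∀ s ∈ Set.Icc (0:ℝ) t, ‖v s‖ ≤ 2 * M := by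
    intro s hs
    rw [hv s hs.1]
    refine (norm_sub_le _ _).trans ?_
    have h1 : ‖x (s - r)‖ ≤ M := hMx _ ⟨harg2 s hs.1, by nlinarith [hs.2]⟩
    have h2 : ‖x (s - r - ε * d s)‖ ≤ M := by
      refine hMx _ ⟨harg1 s hs.1, ?_⟩
      have hds := (hd1 s hs.1).1
      have : -(ε * d s) ≤ ε := by nlinarith
      nlinarith [hs.2]
    linarith
  -- the sup over v
  set Sv : ℝ := sSup ((fun s => Real.exp (σ * s) * ‖v s‖) '' Set.Icc 0 t) with hSv
  have hvBdd : BddAbove ((fun s => Real.exp (σ * s) * ‖v s‖) '' Set.Icc 0 t) := by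
    refine ⟨Real.exp (σ * t) * (2 * M), ?_⟩
    rintro y ⟨s, hs, rfl⟩
    have h1 : Real.exp (σ * s) ≤ Real.exp (σ * t) :=
      Real.exp_le_exp.2 (mul_le_mul_of_nonneg_left hs.2 hσ0.le)
    exact mul_le_mul h1 (hvnorm s hs) (norm_nonneg _) (Real.exp_pos _).le
  have hvle : ∀ s ∈ Set.Icc (0:ℝ) t, Real.exp (σ * s) * ‖v s‖ ≤ Sv :=
    fun s hs => le_csSup hvBdd ⟨s, hs, rfl⟩
  have hSv0 : 0 ≤ Sv := by
    refine le_trans ?_ (hvle 0 ⟨le_rfl, ht⟩)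
    positivity
  -- bound on f in terms of v
  have hfv : ∀ s ∈ Set.Ioc (0:ℝ) t, ‖f s‖ ≤ ‖Cc‖ * (Sv * Real.exp (-(σ * s))) := by
    intro s hs
    have hs0 : (0:ℝ) ≤ s := hs.1.le
    have hvs : x (s - r - ε * d s) - x (s - r) = -(v s) := by
      rw [hv s hs0]; abel
    have h1 : ‖f s‖ = |q s| * ‖Cc (v s)‖ := by
      simp only [hfdef, norm_smul, Real.norm_eq_abs, hvs, map_neg, norm_neg]
    rw [h1]
    have h2 : ‖Cc (v s)‖ ≤ ‖Cc‖ * ‖v s‖ := Cc.le_opNorm _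
    have h3 : ‖v s‖ ≤ Sv * Real.exp (-(σ * s)) := by
      have h4 := hvle s ⟨hs0, hs.2⟩
      have h5 : (0:ℝ) < Real.exp (σ * s) := Real.exp_pos _
      rw [Real.exp_neg]
      calc ‖v s‖ = (Real.exp (σ * s))⁻¹ * (Real.exp (σ * s) * ‖v s‖) := by
            field_simp
        _ ≤ (Real.exp (σ * s))⁻¹ * Sv := by
            exact mul_le_mul_of_nonneg_left h4 (by positivity)
        _ = Sv * (Real.exp (σ * s))⁻¹ := mul_comm _ _
    calc |q s| * ‖Cc (v s)‖ ≤ 1 * (‖Cc‖ * (Sv * Real.exp (-(σ * s)))) := by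
          refine mul_le_mul (hq_abs s hs0) (h2.trans ?_) (norm_nonneg _) zero_le_one
          exact mul_le_mul_of_nonneg_left h3 (norm_nonneg _)
      _ = ‖Cc‖ * (Sv * Real.exp (-(σ * s))) := one_mul _
  -- decay bound in CLM form
  have hEdecay : ∀ s : ℝ, 0 ≤ s → ‖NormedSpace.exp (s • Ac)‖ ≤ Θ * Real.exp (-lam * s) := by
    intro s hs
    have := hdecay s hs
    rwa [opNorm_eq', clm_mexp'] at this
  -- key pointwise estimate
  have key : ∀ τ : ℝ, 0 ≤ τ → τ ≤ t →
      Real.exp (σ * τ) * ‖x τ‖ ≤ Θ * ‖x 0‖ + Θ * ‖Cc‖ / (lam - σ) * Sv := by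
    intro τ hτ0 hτt
    haveI : IsFiniteMeasure (volume.restrict (Set.Ioc (0:ℝ) τ)) := by
      constructor
      simp [Real.volume_Ioc, lt_top_iff_ne_top]
    have hL : (0:ℝ) < lam - σ := by linarith
    have hCc0 : (0:ℝ) ≤ ‖Cc‖ := norm_nonneg _
    -- bound for f on (0, τ]
    have hMgbd : ∀ s ∈ Set.Ioc (0:ℝ) τ, ‖f s‖ ≤ ‖Cc‖ * Sv := by
      intro s hs
      have hst : s ∈ Set.Ioc (0:ℝ) t := ⟨hs.1, hs.2.trans hτt⟩
      refine (hfv s hst).trans ?_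
      have he1 : Real.exp (-(σ * s)) ≤ 1 := by
        rw [Real.exp_le_one_iff]
        have : 0 < σ * s := mul_pos hσ0 hs.1
        linarith
      have : Sv * Real.exp (-(σ * s)) ≤ Sv * 1 :=
        mul_le_mul_of_nonneg_left he1 hSv0
      nlinarith
    -- apply variation of constants
    have hxcτ : ContinuousOn x (Set.Icc 0 τ) := hxc.mono (hsubIci τ hτ0)
    have hvoc := voc Ac (x 0) f x τ hτ0 (hfmeas τ) (‖Cc‖ * Sv) hMgbd hxcτ (hODE τ hτ0)
    have hone : NormedSpace.exp (τ • Ac) * NormedSpace.exp ((-τ) • Ac) = 1 := by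
      rw [expE_add]
      have : τ + -τ = (0:ℝ) := by ring
      rw [this, zero_smul, NormedSpace.exp_zero]
    have hxτ : x τ = NormedSpace.exp (τ • Ac)
        (x 0 + ∫ u in (0:ℝ)..τ, NormedSpace.exp ((-u) • Ac) (f u)) := by
      rw [← hvoc, ← ContinuousLinearMap.mul_apply, hone, ContinuousLinearMap.one_apply]
    -- integrability of the integrand
    obtain ⟨Me, hMe⟩ := (isCompact_Icc (a := (0:ℝ)) (b := τ)).exists_bound_of_continuousOn
      (expE_cont Ac).continuousOn
    have hMe0 : (0:ℝ) ≤ Me := (norm_nonneg _).trans (hMe 0 ⟨le_rfl, hτ0⟩)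
    have hint : IntervalIntegrable (fun u => NormedSpace.exp ((-u) • Ac) (f u)) volume 0 τ := by
      rw [intervalIntegrable_iff, Set.uIoc_of_le hτ0]
      refine Integrable.mono' (integrable_const (Me * (‖Cc‖ * Sv))) ?_ ?_
      · exact (isBoundedBilinearMap_apply.continuous).comp_aestronglyMeasurable
          (((expE_cont Ac).aestronglyMeasurable).prodMk (hfmeas τ))
      · refine (ae_restrict_iff' measurableSet_Ioc).2 (Filter.Eventually.of_forall fun u hu => ?_)
        refine ((NormedSpace.exp ((-u) • Ac)).le_opNorm _).trans ?_
        exact mul_le_mul (hMe u ⟨hu.1.le, hu.2⟩) (hMgbd u hu) (norm_nonneg _) hMe0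
    -- push the exponential inside
    have h6 : (fun u => NormedSpace.exp (τ • Ac) (NormedSpace.exp ((-u) • Ac) (f u)))
        = fun u => NormedSpace.exp ((τ - u) • Ac) (f u) := by
      funext u
      rw [← ContinuousLinearMap.mul_apply, expE_add]
      have : τ + -u = τ - u := by ring
      rw [this]
    have hx2 : x τ = NormedSpace.exp (τ • Ac) (x 0)
        + ∫ u in (0:ℝ)..τ, NormedSpace.exp ((τ - u) • Ac) (f u) := by
      rw [hxτ, map_add, ← (NormedSpace.exp (τ • Ac)).intervalIntegral_comp_comm hint]
      congr 1
      refine intervalIntegral.integral_congr (fun u _ => ?_)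
      rw [← ContinuousLinearMap.mul_apply, expE_add]
      have huu : τ + -u = τ - u := by ring
      rw [huu]
    -- norm estimates
    have hb1 : ‖NormedSpace.exp (τ • Ac) (x 0)‖ ≤ Θ * Real.exp (-lam * τ) * ‖x 0‖ := by
      refine ((NormedSpace.exp (τ • Ac)).le_opNorm _).trans ?_
      exact mul_le_mul_of_nonneg_right (hEdecay τ hτ0) (norm_nonneg _)
    set K : ℝ := Θ * ‖Cc‖ * Sv with hK
    have hK0 : 0 ≤ K := by positivity
    have hgcont : Continuous (fun u : ℝ =>
        K * (Real.exp (-lam * (τ - u)) * Real.exp (-(σ * u)))) := by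
      fun_prop
    have hb2 : ‖∫ u in (0:ℝ)..τ, NormedSpace.exp ((τ - u) • Ac) (f u)‖
        ≤ ∫ u in (0:ℝ)..τ, K * (Real.exp (-lam * (τ - u)) * Real.exp (-(σ * u))) := by
      have hmono := intervalIntegral.norm_integral_le_of_norm_le
        (μ := volume) (a := (0:ℝ)) (b := τ)
        (f := fun u => NormedSpace.exp ((τ - u) • Ac) (f u))
        (g := fun u => K * (Real.exp (-lam * (τ - u)) * Real.exp (-(σ * u))))
        hτ0 ?_ (hgcont.intervalIntegrable 0 τ)
      · exact hmono
      · refine Filter.Eventually.of_forall fun u hu => ?_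
        have hτu : (0:ℝ) ≤ τ - u := by linarith [hu.2]
        have hfu : ‖f u‖ ≤ ‖Cc‖ * (Sv * Real.exp (-(σ * u))) :=
          hfv u ⟨hu.1, hu.2.trans hτt⟩
        refine ((NormedSpace.exp ((τ - u) • Ac)).le_opNorm _).trans ?_
        have := mul_le_mul (hEdecay (τ - u) hτu) hfu (norm_nonneg _)
          (by positivity : (0:ℝ) ≤ Θ * Real.exp (-lam * (τ - u)))
        calc ‖NormedSpace.exp ((τ - u) • Ac)‖ * ‖f u‖
            ≤ (Θ * Real.exp (-lam * (τ - u))) * (‖Cc‖ * (Sv * Real.exp (-(σ * u)))) := this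
          _ = K * (Real.exp (-lam * (τ - u)) * Real.exp (-(σ * u))) := by
              rw [hK]; ring
    -- compute the dominating integral
    have h7 : (fun u : ℝ => K * (Real.exp (-lam * (τ - u)) * Real.exp (-(σ * u))))
        = fun u : ℝ => (K * Real.exp (-lam * τ)) * Real.exp ((lam - σ) * u) := by
      funext u
      have e1 : Real.exp (-lam * (τ - u)) * Real.exp (-(σ * u))
          = Real.exp (-lam * τ) * Real.exp ((lam - σ) * u) := by
        rw [← Real.exp_add, ← Real.exp_add]
        ring_nf
      rw [e1]
      ring
    have h8 : ∫ u in (0:ℝ)..τ, Real.exp ((lam - σ) * u)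
        = (Real.exp ((lam - σ) * τ) - 1) / (lam - σ) := by
      have hd : ∀ u ∈ Set.uIcc (0:ℝ) τ, HasDerivAt
          (fun w : ℝ => Real.exp ((lam - σ) * w) / (lam - σ))
          (Real.exp ((lam - σ) * u)) u := by
        intro u _
        have h9 : HasDerivAt (fun w : ℝ => (lam - σ) * w) (lam - σ) u := by
          simpa using (hasDerivAt_id u).const_mul (lam - σ)
        have h10 := (Real.hasDerivAt_exp ((lam - σ) * u)).comp u h9
        have h11 := h10.div_const (lam - σ)
        have h12 : Real.exp ((lam - σ) * u) * (lam - σ) / (lam - σ)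
            = Real.exp ((lam - σ) * u) := by
          field_simp
        rwa [h12] at h11
      rw [intervalIntegral.integral_eq_sub_of_hasDerivAt hd
        ((Real.continuous_exp.comp (continuous_const.mul continuous_id)).intervalIntegrable 0 τ)]
      rw [mul_zero, Real.exp_zero]
      ring
    have hJ : ∫ u in (0:ℝ)..τ, K * (Real.exp (-lam * (τ - u)) * Real.exp (-(σ * u)))
        = (K * Real.exp (-lam * τ)) * ((Real.exp ((lam - σ) * τ) - 1) / (lam - σ)) := by
      rw [h7, intervalIntegral.integral_const_mul, h8]
    -- final numeric estimate
    have hxnorm : ‖x τ‖ ≤ Θ * Real.exp (-lam * τ) * ‖x 0‖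
        + (K * Real.exp (-lam * τ)) * ((Real.exp ((lam - σ) * τ) - 1) / (lam - σ)) := by
      rw [hx2]
      refine (norm_add_le _ _).trans ?_
      exact add_le_add hb1 (hb2.trans (le_of_eq hJ))
    set a : ℝ := Real.exp ((σ - lam) * τ) with ha
    have ha0 : 0 < a := Real.exp_pos _
    have ha1 : a ≤ 1 := by
      rw [ha, Real.exp_le_one_iff]
      nlinarith
    have hae : Real.exp (σ * τ) * Real.exp (-lam * τ) = a := by
      rw [ha, ← Real.exp_add]
      ring_nf
    have hab : a * Real.exp ((lam - σ) * τ) = 1 := by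
      rw [ha, ← Real.exp_add]
      have : (σ - lam) * τ + (lam - σ) * τ = 0 := by ring
      rw [this, Real.exp_zero]
    have hstep := mul_le_mul_of_nonneg_left hxnorm (Real.exp_pos (σ * τ)).le
    calc Real.exp (σ * τ) * ‖x τ‖
        ≤ Real.exp (σ * τ) * (Θ * Real.exp (-lam * τ) * ‖x 0‖
            + (K * Real.exp (-lam * τ)) * ((Real.exp ((lam - σ) * τ) - 1) / (lam - σ))) := hstep
      _ = a * (Θ * ‖x 0‖) + K * ((a * Real.exp ((lam - σ) * τ) - a) / (lam - σ)) := by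
          rw [← hae]; ring
      _ = a * (Θ * ‖x 0‖) + K * ((1 - a) / (lam - σ)) := by rw [hab]
      _ ≤ 1 * (Θ * ‖x 0‖) + K * (1 / (lam - σ)) := by
          refine add_le_add ?_ ?_
          · exact mul_le_mul_of_nonneg_right ha1 (by positivity)
          · refine mul_le_mul_of_nonneg_left ?_ hK0
            exact (div_le_div_iff_of_pos_right hL).2 (by linarith)
      _ = Θ * ‖x 0‖ + Θ * ‖Cc‖ / (lam - σ) * Sv := by
          rw [hK]; ring
  -- conclude
  rw [hnormCc]
  refine csSup_le ?_ ?_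
  · exact (Set.nonempty_Icc.2 ht).image _
  · rintro y ⟨s, hs, rfl⟩
    simpa using key s hs.1 hs.2
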